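/- Let 0 ≤ r ≤ n with n = 2m even and let Φ(e_1), …, Φ(e_n) be the 2^m × 2^m complex matrices built from Kronecker products of E, T, U, V with signature factors τ_j (τ_j = i for j ≤ r, else 1). For ε = ±1 let u(ε) = (√2/2)·(1, −εi) ∈ ℂ², and let u(ε_m,…,ε_1) = u(ε_m) ⊗ ⋯ ⊗ u(ε_1) be the associated basis of ℂ^{2^m}. Define Δ⁺ (respectively Δ⁻) as the span of those u(ε_m,…,ε_1) with ε_1·ε_2·⋯·ε_m = 1 (respectively = −1). Then for all indices i, j, the product matrix Φ(e_i)·Φ(e_j) maps Δ⁺ into Δ⁺ and Δ⁻ into Δ⁻. -/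

import Mathlib

/-!
STATEMENT 6: For 0 ≤ r ≤ n = 2m and the spinor matrices Φ(e₁), …, Φ(eₙ) of
size 2^m (realized on the index set `Fin m → Fin 2`), the products Φ(e_i)Φ(e_j)
preserve the half-spinor modules Δ⁺ and Δ⁻, where Δ± is the span of the basis
vectors u(ε_m,…,ε_1) = u(ε_m) ⊗ ⋯ ⊗ u(ε_1) with ε₁⋯ε_m = ±1 and
u(ε) = (√2/2)·(1, −εi).
-/

open Matrix

noncomputable def Emat : Matrix (Fin 2) (Fin 2) ℂ := 1
noncomputable def Tmat : Matrix (Fin 2) (Fin 2) ℂ := !![0, -Complex.I; Complex.I, 0]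
noncomputable def Umat : Matrix (Fin 2) (Fin 2) ℂ := !![Complex.I, 0; 0, -Complex.I]
noncomputable def Vmat : Matrix (Fin 2) (Fin 2) ℂ := !![0, Complex.I; Complex.I, 0]

/-- The 2×2 factor in position `t` (from the right, 0-based) of the Kronecker
product defining the generator whose distinguished factor `M` (= U or V) sits
in position `k`. -/
noncomputable def cliffordFactor (k : ℕ) (M : Matrix (Fin 2) (Fin 2) ℂ) (t : ℕ) :
    Matrix (Fin 2) (Fin 2) ℂ :=
  if t < k then Tmat else if t = k then M else Emat

/-- The spinor matrix `Φ(e_{j+1})` for signature `(r, 2m − r)`. -/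
noncomputable def Phi (r m : ℕ) (j : Fin (2 * m)) :
    Matrix (Fin m → Fin 2) (Fin m → Fin 2) ℂ :=
  (if (j : ℕ) + 1 ≤ r then Complex.I else 1) •
    Matrix.of fun p q => ∏ t : Fin m,
      cliffordFactor ((j : ℕ) / 2) (if (j : ℕ) % 2 = 0 then Umat else Vmat)
        (t : ℕ) (p t) (q t)

/-- `u(ε) = (√2/2)·(1, −εi) ∈ ℂ²`. -/
noncomputable def uvec (ε : ℂ) : Fin 2 → ℂ := fun i =>
  ((Real.sqrt 2 / 2 : ℝ) : ℂ) * (if i = 0 then 1 else -ε * Complex.I)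

/-- The basis vector `u(ε_m,…,ε_1) = u(ε_m) ⊗ ⋯ ⊗ u(ε_1)` of `ℂ^{2^m}`;
the factor `u(ε_{t+1})` sits in Kronecker position `t`. -/
noncomputable def uTensor {m : ℕ} (ε : Fin m → ℂ) : (Fin m → Fin 2) → ℂ :=
  fun p => ∏ t, uvec (ε t) (p t)

/-- The half-spinor module Δ^{sign}: the span of the `u(ε_m,…,ε_1)` with
`ε_1 ⋯ ε_m = sign` (each `ε_t = ±1`). -/
noncomputable def halfSpinor (m : ℕ) (sign : ℂ) : Submodule ℂ ((Fin m → Fin 2) → ℂ) :=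
  Submodule.span ℂ
    {v | ∃ ε : Fin m → ℂ, (∀ t, ε t = 1 ∨ ε t = -1) ∧ (∏ t, ε t) = sign ∧ v = uTensor ε}

lemma Emat_mulVec (ε : ℂ) : Emat.mulVec (uvec ε) = uvec ε := by
  simp [Emat, Matrix.one_mulVec]


lemma Tmat_mulVec (ε : ℂ) (hε : ε = 1 ∨ ε = -1) :
    Tmat.mulVec (uvec ε) = (-ε) • uvec ε := by
  funext x
  fin_cases x <;>
  · simp [Tmat, Matrix.mulVec, dotProduct, uvec, Fin.sum_univ_two]
    rcases hε with h | h <;> subst h <;> ring_nf <;> simp [Complex.I_sq] <;> ring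


lemma Umat_mulVec (ε : ℂ) :
    Umat.mulVec (uvec ε) = Complex.I • uvec (-ε) := by
  funext x
  fin_cases x <;>
    simp [Umat, Matrix.mulVec, dotProduct, uvec, Fin.sum_univ_two]


lemma Vmat_mulVec (ε : ℂ) (hε : ε = 1 ∨ ε = -1) :
    Vmat.mulVec (uvec ε) = ε • uvec (-ε) := by
  funext x
  fin_cases x <;>
  · simp [Vmat, Matrix.mulVec, dotProduct, uvec, Fin.sum_univ_two]
    rcases hε with h | h <;> subst h <;> ring_nf <;> simp [Complex.I_sq] <;> ring


lemma phi_gen (r m : ℕ) (j : Fin (2 * m)) (ε : Fin m → ℂ)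
    (hε : ∀ t, ε t = 1 ∨ ε t = -1) :
    ∃ c : ℂ, ∃ k : Fin m,
      (Phi r m j).mulVec (uTensor ε)
        = c • uTensor (Function.update ε k (-ε k)) := by
  have hk : (j : ℕ) / 2 < m := Nat.div_lt_of_lt_mul (by omega)
  set k : Fin m := ⟨(j : ℕ) / 2, hk⟩ with hkdef
  set M : Matrix (Fin 2) (Fin 2) ℂ := if (j : ℕ) % 2 = 0 then Umat else Vmat with hM
  set μ : ℂ := if (j : ℕ) % 2 = 0 then Complex.I else ε k with hμ
  set s : Fin m → ℂ := fun t =>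
    if (t : ℕ) < (j : ℕ) / 2 then -ε t else if (t : ℕ) = (j : ℕ) / 2 then μ else 1
    with hs
  have hfac : ∀ t : Fin m,
      (cliffordFactor ((j : ℕ) / 2) M (t : ℕ)).mulVec (uvec (ε t))
        = s t • uvec (Function.update ε k (-ε k) t) := by
    intro t
    have htk : (t = k) ↔ ((t : ℕ) = (j : ℕ) / 2) := by
      constructor
      · intro h; subst h; rfl
      · intro h; exact Fin.ext h
    by_cases h1 : (t : ℕ) < (j : ℕ) / 2
    · have hne : t ≠ k := by
        intro h; rw [htk] at h; omega
      rw [Function.update_of_ne hne]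
      simp only [cliffordFactor, hs, if_pos h1]
      exact Tmat_mulVec (ε t) (hε t)
    · by_cases h2 : (t : ℕ) = (j : ℕ) / 2
      · have heq : t = k := htk.mpr h2
        rw [heq]
        rw [Function.update_self]
        have hk1 : ¬ ((k : ℕ) < (j : ℕ) / 2) := lt_irrefl _
        have hk2 : (k : ℕ) = (j : ℕ) / 2 := rfl
        simp only [cliffordFactor, hs, hM, hμ, lt_self_iff_false, if_false, if_true,
          if_neg hk1, if_pos hk2]
        by_cases h3 : (j : ℕ) % 2 = 0
        · simp only [if_pos h3]
          exact Umat_mulVec (ε k)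
        · simp only [if_neg h3]
          exact Vmat_mulVec (ε k) (hε k)
      · have hne : t ≠ k := by
          intro h; rw [htk] at h; omega
        rw [Function.update_of_ne hne]
        simp only [cliffordFactor, hs, if_neg h1, if_neg h2]
        rw [Emat_mulVec, one_smul]
  refine ⟨(if (j : ℕ) + 1 ≤ r then Complex.I else 1) * ∏ t, s t, k, ?_⟩
  funext p
  rw [Phi, Matrix.smul_mulVec]
  simp only [Pi.smul_apply, smul_eq_mul, mul_assoc]
  congr 1
  calc (Matrix.of fun p q => ∏ t : Fin m,
          cliffordFactor ((j : ℕ) / 2) M (t : ℕ) (p t) (q t)).mulVec (uTensor ε) p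
      = ∑ q : Fin m → Fin 2, ∏ t : Fin m,
          (cliffordFactor ((j : ℕ) / 2) M (t : ℕ) (p t) (q t) * uvec (ε t) (q t)) := by
        simp [Matrix.mulVec, dotProduct, uTensor, Finset.prod_mul_distrib]
    _ = ∏ t : Fin m, ∑ x : Fin 2,
          cliffordFactor ((j : ℕ) / 2) M (t : ℕ) (p t) x * uvec (ε t) x := by
        rw [Finset.prod_univ_sum, Fintype.piFinset_univ]
    _ = ∏ t : Fin m, ((cliffordFactor ((j : ℕ) / 2) M (t : ℕ)).mulVec (uvec (ε t))) (p t) :=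
        rfl
    _ = ∏ t : Fin m, (s t * uvec (Function.update ε k (-ε k) t) (p t)) := by
        refine Finset.prod_congr rfl fun t _ => ?_
        rw [hfac t]; rfl
    _ = (∏ t, s t) * uTensor (Function.update ε k (-ε k)) p := by
        rw [Finset.prod_mul_distrib]; rfl


lemma update_pm {m : ℕ} (ε : Fin m → ℂ) (k : Fin m) (hε : ∀ t, ε t = 1 ∨ ε t = -1) :
    ∀ t, Function.update ε k (-ε k) t = 1 ∨ Function.update ε k (-ε k) t = -1 := by
  intro t
  by_cases h : t = k
  · subst h
    rw [Function.update_self]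
    rcases hε t with h' | h' <;> rw [h'] <;> simp
  · rw [Function.update_of_ne h]; exact hε t


lemma prod_update_neg {m : ℕ} (ε : Fin m → ℂ) (k : Fin m) :
    (∏ t, Function.update ε k (-ε k) t) = -∏ t, ε t := by
  rw [← Finset.mul_prod_erase Finset.univ _ (Finset.mem_univ k),
      ← Finset.mul_prod_erase Finset.univ ε (Finset.mem_univ k),
      Function.update_self]
  rw [Finset.prod_congr rfl (fun t ht => Function.update_of_ne (Finset.ne_of_mem_erase ht) _ _)]
  ring


lemma preserve_aux (r m : ℕ) (i j : Fin (2 * m)) (sign : ℂ) :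
    ∀ v ∈ halfSpinor m sign, (Phi r m i * Phi r m j).mulVec v ∈ halfSpinor m sign := by
  intro v hv
  induction hv using Submodule.span_induction with
  | mem x hx =>
    obtain ⟨ε, hε, hprod, rfl⟩ := hx
    obtain ⟨c, k, hc⟩ := phi_gen r m j ε hε
    obtain ⟨c', k', hc'⟩ := phi_gen r m i _ (update_pm ε k hε)
    rw [← Matrix.mulVec_mulVec, hc, Matrix.mulVec_smul, hc']
    refine Submodule.smul_mem _ _ (Submodule.smul_mem _ _ (Submodule.subset_span ?_))
    refine ⟨_, update_pm _ k' (update_pm ε k hε), ?_, rfl⟩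
    rw [prod_update_neg, prod_update_neg, hprod, neg_neg]
  | zero => simp only [Matrix.mulVec_zero]; exact Submodule.zero_mem _
  | add x y _ _ hx hy =>
    rw [Matrix.mulVec_add]; exact Submodule.add_mem _ hx hy
  | smul a x _ hx =>
    rw [Matrix.mulVec_smul]; exact Submodule.smul_mem _ a hx


theorem Phi_mul_Phi_preserves_half_spinors (r m : ℕ) (hr : r ≤ 2 * m)
    (i j : Fin (2 * m)) :
    (∀ v ∈ halfSpinor m 1, (Phi r m i * Phi r m j).mulVec v ∈ halfSpinor m 1) ∧
    (∀ v ∈ halfSpinor m (-1), (Phi r m i * Phi r m j).mulVec v ∈ halfSpinor m (-1)) :=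
  ⟨preserve_aux r m i j 1, preserve_aux r m i j (-1)⟩
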